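/- Let F be a field, R the ring of ternions over F, and n ≥ 1. For every F-linear bijection f of F^{n+1} there exists A ∈ GL_{n+1}(R) such that, under the coordinate bijection (rad R)^{n+1} → F^{n+1}, the restriction of the map X ↦ X·A to (rad R)^{n+1} induces f; conversely, the restriction to (rad R)^{n+1} of the action of any A ∈ GL_{n+1}(R) induces an F-linear bijection of F^{n+1}. -/

import Mathlib

set_option synthInstance.maxHeartbeats 1000000
set_option maxHeartbeats 1000000

/-- The ring of ternions over a field `F`: the subring of `2×2` matrices over `F`
consisting of all upper triangular matrices. -/
def ternions (F : Type) [Field F] : Subring (Matrix (Fin 2) (Fin 2) F) where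
  carrier := {A | A 1 0 = 0}
  zero_mem' := by simp
  one_mem' := by simp [Matrix.one_apply]
  add_mem' := by
    intro a b ha hb
    simp only [Set.mem_setOf_eq, Matrix.add_apply] at *
    simp [ha, hb]
  neg_mem' := by
    intro a ha
    simp only [Set.mem_setOf_eq, Matrix.neg_apply] at *
    simp [ha]
  mul_mem' := by
    intro a b ha hb
    simp only [Set.mem_setOf_eq, Matrix.mul_apply, Fin.sum_univ_two] at *
    simp [ha, hb]


/-- The lower-right corner ring homomorphism of the ternions. -/
def ternionDD (F : Type) [Field F] : ternions F →+* F where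
  toFun t := t.val 1 1
  map_one' := by simp [Matrix.one_apply]
  map_mul' a b := by
    have h : ((a * b : ternions F) : Matrix (Fin 2) (Fin 2) F)
        = (a : Matrix (Fin 2) (Fin 2) F) * b := rfl
    have ha : (a : Matrix (Fin 2) (Fin 2) F) 1 0 = 0 := a.2
    simp [h, Matrix.mul_apply, Fin.sum_univ_two, ha]
  map_zero' := rfl
  map_add' a b := rfl

/-- The scalar embedding of `F` into the ternions. -/
def ternionUp (F : Type) [Field F] : F →+* ternions F :=
  RingHom.codRestrict (Matrix.scalar (Fin 2)) (ternions F) (by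
    intro d
    show (Matrix.scalar (Fin 2)) d 1 0 = 0
    simp [Matrix.scalar_apply])

lemma ternionUp_dd (F : Type) [Field F] (d : F) :
    ((ternionUp F d : ternions F) : Matrix (Fin 2) (Fin 2) F) 1 1 = d := by
  show (Matrix.scalar (Fin 2)) d 1 1 = d
  simp [Matrix.scalar_apply]

open Matrix in
lemma vecMul_key (F : Type) [Field F] {m : ℕ} (M : Matrix (Fin m) (Fin m) (ternions F))
    (v : Fin m → ternions F) (hv : ∀ j, ((v j : Matrix (Fin 2) (Fin 2) F)) 0 0 = 0) (i : Fin m) :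
    ((Matrix.vecMul v M i : ternions F) : Matrix (Fin 2) (Fin 2) F) 0 1
      = ∑ j, ((v j : Matrix (Fin 2) (Fin 2) F)) 0 1
          * ((M j i : ternions F) : Matrix (Fin 2) (Fin 2) F) 1 1 := by
  have h : ((Matrix.vecMul v M i : ternions F) : Matrix (Fin 2) (Fin 2) F)
      = ∑ j, (v j : Matrix (Fin 2) (Fin 2) F) * (M j i : Matrix (Fin 2) (Fin 2) F) := by
    rw [Matrix.vecMul, dotProduct]
    push_cast
    rfl
  rw [h, Matrix.sum_apply]
  refine Finset.sum_congr rfl fun j _ => ?_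
  simp [Matrix.mul_apply, Fin.sum_univ_two, hv j]

open Matrix in
/-- The `F`-linear bijections of `(rad R)^{n+1} ≅ F^{n+1}` are precisely the restrictions
of the `R`-linear bijections `X ↦ X·A`, `A ∈ GL_{n+1}(R)`, of `R^{n+1}` to
`(rad R)^{n+1}`, read through the coordinate bijection `(rad R)^{n+1} → F^{n+1}`. -/
theorem ternion_GL_induces_all_linear_bijections_on_rad (F : Type) [Field F] (n : ℕ)
    (hn : 1 ≤ n) :
    (∀ f : (Fin (n + 1) → F) ≃ₗ[F] (Fin (n + 1) → F),
      ∃ A : (Matrix (Fin (n + 1)) (Fin (n + 1)) (ternions F))ˣ,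
        ∀ v : Fin (n + 1) → ternions F, (∀ i, (v i).val 0 0 = 0 ∧ (v i).val 1 1 = 0) →
          (fun i => (Matrix.vecMul v A.val i).val 0 1) = f (fun i => (v i).val 0 1)) ∧
    (∀ A : (Matrix (Fin (n + 1)) (Fin (n + 1)) (ternions F))ˣ,
      ∃ f : (Fin (n + 1) → F) ≃ₗ[F] (Fin (n + 1) → F),
        ∀ v : Fin (n + 1) → ternions F, (∀ i, (v i).val 0 0 = 0 ∧ (v i).val 1 1 = 0) →
          (fun i => (Matrix.vecMul v A.val i).val 0 1) = f (fun i => (v i).val 0 1)) := by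
  constructor
  · intro f
    set M : Matrix (Fin (n+1)) (Fin (n+1)) F :=
      LinearMap.toMatrix' (f : (Fin (n+1) → F) →ₗ[F] (Fin (n+1) → F)) with hM
    have hinv : Invertible M := invertibleOfRightInverse M
      (LinearMap.toMatrix' (f.symm : (Fin (n+1) → F) →ₗ[F] (Fin (n+1) → F))) (by
        rw [hM, ← LinearMap.toMatrix'_comp]
        simp)
    have hinvT : Invertible Mᵀ := Matrix.invertibleTranspose M
    have hUnit : IsUnit Mᵀ := isUnit_of_invertible Mᵀ
    obtain ⟨B, hB⟩ := hUnit
    refine ⟨Units.map (RingHom.mapMatrix (ternionUp F)).toMonoidHom B, ?_⟩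
    intro v hv
    funext i
    have hval : (Units.map (RingHom.mapMatrix (ternionUp F)).toMonoidHom B).val
        = (B.val).map (ternionUp F) := rfl
    rw [hval, vecMul_key F _ v (fun j => (hv j).1) i]
    have hf : f (fun i => (v i).val 0 1) = M.mulVec (fun i => (v i).val 0 1) := by
      conv_lhs => rw [show (f (fun i => (v i).val 0 1))
        = Matrix.toLin' M (fun i => (v i).val 0 1) by rw [hM, Matrix.toLin'_toMatrix']; rfl]
      rw [Matrix.toLin'_apply]
    rw [hf]
    rw [Matrix.mulVec, dotProduct]
    refine Finset.sum_congr rfl fun j _ => ?_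
    rw [Matrix.map_apply, ternionUp_dd, hB, Matrix.transpose_apply, mul_comm]
  · intro A
    set B : (Matrix (Fin (n+1)) (Fin (n+1)) F)ˣ :=
      Units.map (RingHom.mapMatrix (ternionDD F)).toMonoidHom A with hB
    have hinv : Invertible B.val := B.invertible
    have hinvT : Invertible (B.val)ᵀ := Matrix.invertibleTranspose B.val
    refine ⟨Matrix.toLinearEquiv' (B.val)ᵀ hinvT, ?_⟩
    intro v hv
    funext i
    rw [vecMul_key F _ v (fun j => (hv j).1) i]
    have hf : (Matrix.toLinearEquiv' (B.val)ᵀ hinvT) (fun i => (v i).val 0 1)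
        = (B.val)ᵀ.mulVec (fun i => (v i).val 0 1) := by
      rw [show ((Matrix.toLinearEquiv' (B.val)ᵀ hinvT) (fun i => (v i).val 0 1))
        = Matrix.toLin' (B.val)ᵀ (fun i => (v i).val 0 1) from rfl, Matrix.toLin'_apply]
    rw [hf, Matrix.mulVec, dotProduct]
    refine Finset.sum_congr rfl fun j _ => ?_
    have : B.val j i = ((A.val j i : ternions F) : Matrix (Fin 2) (Fin 2) F) 1 1 := by
      rw [hB]
      rfl
    rw [Matrix.transpose_apply, ← this, mul_comm]
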